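/- Let X ⊂ ℝ^d be compact and P a distribution on X × Y with envelope of order γ > 0 (i.e., |2η(x)−1| ≤ c_γ τ_x^γ for P_X-a.e. x) and Tsybakov noise exponent 0 ≤ q < 1. Then for all t, τ ≥ 0: ∫_X |2η(x)−1| e^{−τ_x²/t} dP_X(x) ≤ C τ^{q+1} + exp(−(τ/c_γ)^{2/γ}/t), where C is the Tsybakov constant. -/

import Mathlib

open MeasureTheory Metric

/-- The distance `τ_x` of a point to the union of the set `{η = 1/2}` and the opposite class:
`τ_x = d(x, X₀ ∪ X₁)` if `η x < 1/2`, `τ_x = d(x, X₀ ∪ X₋₁)` if `η x > 1/2`, `0` otherwise. -/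
noncomputable def tauDist {d : ℕ} (X : Set (EuclideanSpace ℝ (Fin d)))
    (η : EuclideanSpace ℝ (Fin d) → ℝ) (x : EuclideanSpace ℝ (Fin d)) : ℝ :=
  if η x < 1 / 2 then
    infDist x ({z ∈ X | η z = 1 / 2} ∪ {z ∈ X | 1 / 2 < η z})
  else if 1 / 2 < η x then
    infDist x ({z ∈ X | η z = 1 / 2} ∪ {z ∈ X | η z < 1 / 2})
  else 0

lemma tauDist_nonneg {d : ℕ} (X : Set (EuclideanSpace ℝ (Fin d)))
    (η : EuclideanSpace ℝ (Fin d) → ℝ) (x : EuclideanSpace ℝ (Fin d)) :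
    0 ≤ tauDist X η x := by
  unfold tauDist
  split_ifs <;> first | exact infDist_nonneg | exact le_refl 0

lemma tauDist_measurable {d : ℕ} (X : Set (EuclideanSpace ℝ (Fin d)))
    (η : EuclideanSpace ℝ (Fin d) → ℝ) (hηm : Measurable η) :
    Measurable (tauDist X η) := by
  unfold tauDist
  refine Measurable.ite (hηm measurableSet_Iio) ?_ ?_
  · exact (continuous_infDist_pt _).measurable
  · exact Measurable.ite (hηm measurableSet_Ioi)
      (continuous_infDist_pt _).measurable measurable_const

/-- Splitting bound: for `X ⊂ ℝ^d` compact and a distribution with envelope of order `γ > 0`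
and Tsybakov noise exponent `0 ≤ q < 1`, for all `t, τ ≥ 0` we have
`∫_X |2η-1| e^{-τ_x²/t} dP_X ≤ C τ^{q+1} + exp(-(τ/c_γ)^{2/γ}/t)`. -/
theorem envelope_tsybakov_split_bound {d : ℕ} (X : Set (EuclideanSpace ℝ (Fin d)))
    (hX : IsCompact X) (μ : Measure (EuclideanSpace ℝ (Fin d))) [IsProbabilityMeasure μ]
    (hsupp : μ Xᶜ = 0) (η : EuclideanSpace ℝ (Fin d) → ℝ) (hηm : Measurable η)
    (hη : ∀ x, η x ∈ Set.Icc (0 : ℝ) 1) (γ cγ C q : ℝ) (hγ : 0 < γ) (hcγ : 0 < cγ)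
    (hC : 0 < C) (hq0 : 0 ≤ q) (hq1 : q < 1)
    (henv : ∀ᵐ x ∂μ, |2 * η x - 1| ≤ cγ * tauDist X η x ^ γ)
    (htsy : ∀ s : ℝ, 0 < s → (μ {x | |2 * η x - 1| ≤ s}).toReal ≤ C * s ^ q) :
    ∀ t τ : ℝ, 0 ≤ t → 0 ≤ τ →
      ∫ x in X, |2 * η x - 1| * Real.exp (-(tauDist X η x) ^ 2 / t) ∂μ ≤
        C * τ ^ (q + 1) + Real.exp (-(τ / cγ) ^ (2 / γ) / t) := by
  intro t τ ht hτ
  set K : ℝ := Real.exp (-(τ / cγ) ^ (2 / γ) / t) with hK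
  set f : EuclideanSpace ℝ (Fin d) → ℝ :=
    fun x => |2 * η x - 1| * Real.exp (-(tauDist X η x) ^ 2 / t) with hf
  set A : Set (EuclideanSpace ℝ (Fin d)) := {x | |2 * η x - 1| ≤ τ} with hAdef
  have hA : MeasurableSet A := by
    have : Measurable fun x => |2 * η x - 1| :=
      ((hηm.const_mul 2).sub measurable_const).abs
    exact this measurableSet_Iic
  have habs : ∀ x, |2 * η x - 1| ≤ 1 := by
    intro x
    rcases hη x with ⟨h0, h1⟩
    rw [abs_le]; constructor <;> linarith
  have habs0 : ∀ x, 0 ≤ |2 * η x - 1| := fun x => abs_nonneg _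
  have hexp1 : ∀ x, Real.exp (-(tauDist X η x) ^ 2 / t) ≤ 1 := by
    intro x
    apply Real.exp_le_one_iff.2
    apply div_nonpos_of_nonpos_of_nonneg _ ht
    simpa using sq_nonneg (tauDist X η x)
  have hK0 : 0 ≤ K := le_of_lt (Real.exp_pos _)
  -- the dominating function
  set g : EuclideanSpace ℝ (Fin d) → ℝ :=
    fun x => A.indicator (fun _ => τ) x + Aᶜ.indicator (fun _ => K) x with hg
  -- pointwise bound
  have hae : ∀ᵐ x ∂(μ.restrict X), f x ≤ g x := by
    refine (ae_restrict_of_ae ?_)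
    filter_upwards [henv] with x hx
    by_cases hxA : x ∈ A
    · have hgx : g x = τ := by
        simp only [hg, Set.indicator_of_mem hxA,
          Set.indicator_of_notMem (show x ∉ Aᶜ from fun h => h hxA), add_zero]
      rw [hgx]
      calc f x ≤ |2 * η x - 1| * 1 := by
            apply mul_le_mul_of_nonneg_left (hexp1 x) (habs0 x)
        _ = |2 * η x - 1| := mul_one _
        _ ≤ τ := hxA
    · have hxlt : τ < |2 * η x - 1| := lt_of_not_ge hxA
      have hτd : τ / cγ < tauDist X η x ^ γ := by
        rw [div_lt_iff₀ hcγ]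
        calc τ < |2 * η x - 1| := hxlt
          _ ≤ cγ * tauDist X η x ^ γ := hx
          _ = tauDist X η x ^ γ * cγ := mul_comm _ _
      have hsq : (τ / cγ) ^ (2 / γ) ≤ (tauDist X η x) ^ 2 := by
        have h1 : (τ / cγ) ^ (2 / γ) ≤ (tauDist X η x ^ γ) ^ (2 / γ) :=
          Real.rpow_le_rpow (by positivity) hτd.le (by positivity)
        have h2 : (tauDist X η x ^ γ) ^ (2 / γ) = (tauDist X η x) ^ (2 : ℕ) := by
          rw [← Real.rpow_mul (tauDist_nonneg X η x),
            ← Real.rpow_natCast (tauDist X η x) 2]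
          congr 1
          push_cast
          field_simp
        exact h2 ▸ h1
      have hexpK : Real.exp (-(tauDist X η x) ^ 2 / t) ≤ K := by
        rw [hK]
        apply Real.exp_le_exp.2
        rcases eq_or_lt_of_le ht with ht0 | ht0
        · simp [← ht0]
        · rw [div_le_div_iff_of_pos_right ht0]
          linarith
      have hgx : g x = K := by
        simp only [hg, Set.indicator_of_notMem hxA,
          Set.indicator_of_mem (show x ∈ Aᶜ from hxA), zero_add]
      rw [hgx]
      calc f x ≤ 1 * Real.exp (-(tauDist X η x) ^ 2 / t) := by
            apply mul_le_mul_of_nonneg_right (habs x) (Real.exp_pos _).le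
        _ = Real.exp (-(tauDist X η x) ^ 2 / t) := one_mul _
        _ ≤ K := hexpK
  have hfmeas : AEStronglyMeasurable f (μ.restrict X) := by
    apply Measurable.aestronglyMeasurable
    apply Measurable.mul
    · exact ((hηm.const_mul 2).sub measurable_const).abs
    · exact (Real.measurable_exp.comp
        ((((tauDist_measurable X η hηm).pow_const 2).neg).div_const t))
  have hfint : Integrable f (μ.restrict X) := by
    refine Integrable.mono' (integrable_const 1) hfmeas ?_
    filter_upwards with x
    rw [Real.norm_eq_abs, abs_of_nonneg (mul_nonneg (habs0 x) (Real.exp_pos _).le)]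
    calc |2 * η x - 1| * Real.exp (-(tauDist X η x) ^ 2 / t)
        ≤ 1 * 1 := mul_le_mul (habs x) (hexp1 x) (Real.exp_pos _).le zero_le_one
      _ = 1 := one_mul 1
  have hgint : Integrable g (μ.restrict X) := by
    apply Integrable.add
    · exact (integrable_const τ).indicator hA
    · exact (integrable_const K).indicator hA.compl
  have hmono : ∫ x in X, f x ∂μ ≤ ∫ x in X, g x ∂μ :=
    integral_mono_ae hfint hgint hae
  have hgval : ∫ x in X, g x ∂μ =
      ((μ.restrict X) A).toReal * τ + ((μ.restrict X) Aᶜ).toReal * K := by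
    rw [hg, integral_add ((integrable_const τ).indicator hA)
      ((integrable_const K).indicator hA.compl),
      integral_indicator_const _ hA, integral_indicator_const _ hA.compl]
    simp [smul_eq_mul]
    rfl
  have hμA : ((μ.restrict X) A).toReal * τ ≤ C * τ ^ (q + 1) := by
    rcases eq_or_lt_of_le hτ with hτ0 | hτ0
    · rw [← hτ0]
      simp
      positivity
    · have h1 : ((μ.restrict X) A).toReal ≤ (μ A).toReal := by
        apply ENNReal.toReal_mono (measure_ne_top μ A)
        exact Measure.restrict_le_self A
      have h2 := htsy τ hτ0
      calc ((μ.restrict X) A).toReal * τ ≤ (C * τ ^ q) * τ := by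
            apply mul_le_mul_of_nonneg_right _ hτ
            exact le_trans h1 h2
        _ = C * τ ^ (q + 1) := by
            rw [Real.rpow_add hτ0, Real.rpow_one]; ring
  have hμAc : ((μ.restrict X) Aᶜ).toReal * K ≤ K := by
    have h1 : ((μ.restrict X) Aᶜ).toReal ≤ 1 := by
      have : (μ.restrict X) Aᶜ ≤ 1 := le_trans (measure_mono (Set.subset_univ _))
        (by rw [Measure.restrict_apply_univ]; exact prob_le_one)
      calc ((μ.restrict X) Aᶜ).toReal ≤ (1 : ENNReal).toReal :=
            ENNReal.toReal_mono (by simp) this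
        _ = 1 := by simp
    calc ((μ.restrict X) Aᶜ).toReal * K ≤ 1 * K :=
          mul_le_mul_of_nonneg_right h1 hK0
      _ = K := one_mul K
  calc ∫ x in X, f x ∂μ ≤ ∫ x in X, g x ∂μ := hmono
    _ = ((μ.restrict X) A).toReal * τ + ((μ.restrict X) Aᶜ).toReal * K := hgval
    _ ≤ C * τ ^ (q + 1) + K := add_le_add hμA hμAc
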